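/- arXiv:2101.03830 — 9 statements merged into one kernel-verified Lean document; each statement's English description precedes it below -/
import Mathlib

section
/- Let M be a smooth boundaryless manifold, N a smooth manifold, X a vector field on M which is of class C¹ (as a section of the tangent bundle), Z a vector field on N, and α : M → N a map differentiable at every point. Suppose that for every t₀ ∈ ℝ and every curve γ : ℝ → M which is an integral curve of X at t₀, the curve α ∘ γ is an integral curve of Z at t₀. Then X and Z are α-related: for every x ∈ M, mfderiv α x (X x) = Z (α x). -/
open scoped Manifold

/-- Converse of the integral-curve mapping property: if `M` is boundaryless and `X` is a `C¹`
vector field on `M`, and if the map `α : M → N` (differentiable everywhere) sends every local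
integral curve of `X` to a local integral curve of `Z`, then `X` and `Z` are `α`-related. -/
theorem alpha_related_of_maps_integral_curves
    {E : Type*} [NormedAddCommGroup E] [NormedSpace ℝ E] [CompleteSpace E]
    {H : Type*} [TopologicalSpace H] {I : ModelWithCorners ℝ E H}
    {M : Type*} [TopologicalSpace M] [ChartedSpace H M] [IsManifold I (⊤ : ℕ∞) M]
    [BoundarylessManifold I M]
    {E' : Type*} [NormedAddCommGroup E'] [NormedSpace ℝ E']
    {H' : Type*} [TopologicalSpace H'] {I' : ModelWithCorners ℝ E' H'}
    {N : Type*} [TopologicalSpace N] [ChartedSpace H' N] [IsManifold I' (⊤ : ℕ∞) N]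
    (X : (x : M) → TangentSpace I x) (Z : (y : N) → TangentSpace I' y)
    (hX : ContMDiff I I.tangent 1 (fun x ↦ (⟨x, X x⟩ : TangentBundle I M)))
    (α : M → N) (hα : ∀ x, MDifferentiableAt I I' α x)
    (hmaps : ∀ (t₀ : ℝ) (γ : ℝ → M), IsMIntegralCurveAt γ X t₀ →
      IsMIntegralCurveAt (α ∘ γ) Z t₀) :
    ∀ x, mfderiv I I' α x (X x) = Z (α x) := by
  intro x
  obtain ⟨γ, h0, hγ⟩ := exists_isMIntegralCurveAt_of_contMDiffAt_boundaryless (0 : ℝ)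
    (hX.contMDiffAt (x := x))
  have h1 : HasMFDerivAt 𝓘(ℝ, ℝ) I' (α ∘ γ) 0
      ((1 : ℝ →L[ℝ] ℝ).smulRight (Z (α (γ 0)))) := (hmaps 0 γ hγ).hasMFDerivAt
  have h2 : HasMFDerivAt 𝓘(ℝ, ℝ) I' (α ∘ γ) 0
      ((mfderiv I I' α (γ 0)).comp ((1 : ℝ →L[ℝ] ℝ).smulRight (X (γ 0)))) :=
    (hα (γ 0)).hasMFDerivAt.comp 0 hγ.hasMFDerivAt
  have : ((1 : ℝ →L[ℝ] ℝ).smulRight (Z (α (γ 0))) : ℝ →L[ℝ] E') = (mfderiv I I' α (γ 0)).comp ((1 : ℝ →L[ℝ] ℝ).smulRight (X (γ 0))) := h1.mfderiv ▸ h2.mfderiv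
  rw [h0] at this
  have h3 := congrArg (fun L : ℝ →L[ℝ] E' ↦ L 1) this
  change (1 : ℝ) • Z (α x) = mfderiv I I' α x ((1 : ℝ) • X x) at h3
  rw [one_smul] at h3
  rw [h3]
  exact congrArg (mfderiv I I' α x) (one_smul ℝ (X x)).symm
end

section
/- Let H : E × E → ℝ be of class C¹ and S : E → ℝ of class C². Then the following are equivalent: (i) the function q ↦ H(q, ∇S q) has zero Fréchet derivative at every q ∈ E (i.e. it is locally constant); (ii) for every q ∈ E, fderiv (fun q' => ∇S q') q (∇_pH(q, ∇S q)) = −∇_qH(q, ∇S q), i.e. the exact 1-form dS is a solution of the generalized Hamiltonian Hamilton–Jacobi problem. -/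
open scoped Gradient

/-- The gradient at `q` of the partial map `q' ↦ H (q', p)`. -/
noncomputable def gradQ {n : ℕ}
    (H : EuclideanSpace ℝ (Fin n) × EuclideanSpace ℝ (Fin n) → ℝ)
    (q p : EuclideanSpace ℝ (Fin n)) : EuclideanSpace ℝ (Fin n) :=
  ∇ (fun q' => H (q', p)) q

/-- The gradient at `p` of the partial map `p' ↦ H (q, p')`. -/
noncomputable def gradP {n : ℕ}
    (H : EuclideanSpace ℝ (Fin n) × EuclideanSpace ℝ (Fin n) → ℝ)
    (q p : EuclideanSpace ℝ (Fin n)) : EuclideanSpace ℝ (Fin n) :=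
  ∇ (fun p' => H (q, p')) p

open RealInnerProductSpace in
/-- For a `C¹` Hamiltonian `H` and a `C²` function `S`, the function `q ↦ H (q, ∇S q)` is
locally constant (zero Fréchet derivative everywhere) iff the exact 1-form `dS` is a solution
of the generalized Hamiltonian Hamilton–Jacobi problem. -/
theorem hamiltonJacobi_iff_exact_solution {n : ℕ}
    (H : EuclideanSpace ℝ (Fin n) × EuclideanSpace ℝ (Fin n) → ℝ)
    (hH : ContDiff ℝ 1 H)
    (S : EuclideanSpace ℝ (Fin n) → ℝ) (hS : ContDiff ℝ 2 S) :
    (∀ q, fderiv ℝ (fun q' => H (q', ∇ S q')) q = 0) ↔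
    (∀ q, fderiv ℝ (fun q' => ∇ S q') q (gradP H q (∇ S q)) = - gradQ H q (∇ S q)) := by
  classical
  have hHdiff : Differentiable ℝ H := hH.differentiable one_ne_zero
  have hS1 : Differentiable ℝ S := hS.differentiable two_ne_zero
  have hfd : ContDiff ℝ 1 (fderiv ℝ S) := hS.fderiv_right (by norm_num)
  have hfd1 : Differentiable ℝ (fderiv ℝ S) := hfd.differentiable one_ne_zero
  set ι : StrongDual ℝ (EuclideanSpace ℝ (Fin n)) ≃ₗᵢ[ℝ] EuclideanSpace ℝ (Fin n) :=
    (InnerProductSpace.toDual ℝ (EuclideanSpace ℝ (Fin n))).symm with hι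
  have hιinner : ∀ (y : StrongDual ℝ (EuclideanSpace ℝ (Fin n)))
      (w : EuclideanSpace ℝ (Fin n)), ⟪ι y, w⟫ = y w := fun y w =>
    InnerProductSpace.toDual_symm_apply
  have hgradcomp : (fun q' => ∇ S q') = (⇑ι ∘ fderiv ℝ S) := rfl
  have hgraddiff : Differentiable ℝ (fun q' => ∇ S q') := by
    rw [hgradcomp]
    exact ι.differentiable.comp hfd1
  -- inner product against the fderiv of the gradient is the second derivative
  have hinnerA : ∀ q v w : EuclideanSpace ℝ (Fin n),
      ⟪fderiv ℝ (fun q' => ∇ S q') q v, w⟫ = fderiv ℝ (fderiv ℝ S) q v w := by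
    intro q v w
    rw [hgradcomp, ι.comp_fderiv]
    exact hιinner _ w
  -- symmetry of the second derivative
  have hsymm : ∀ q v w : EuclideanSpace ℝ (Fin n),
      fderiv ℝ (fderiv ℝ S) q v w = fderiv ℝ (fderiv ℝ S) q w v := by
    intro q v w
    exact second_derivative_symmetric (fun y => (hS1 y).hasFDerivAt)
      (hfd1 q).hasFDerivAt v w
  -- inner product formulas for gradQ and gradP
  have hgradQ : ∀ q p v : EuclideanSpace ℝ (Fin n),
      ⟪gradQ H q p, v⟫ = fderiv ℝ H (q, p) (v, 0) := by
    intro q p v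
    have h1 : HasFDerivAt (fun q' => H (q', p))
        ((fderiv ℝ H (q, p)).comp (ContinuousLinearMap.inl ℝ _ _)) q :=
      (hHdiff (q, p)).hasFDerivAt.comp q (hasFDerivAt_prodMk_left q p)
    have h2 : ⟪gradQ H q p, v⟫ = fderiv ℝ (fun q' => H (q', p)) q v :=
      InnerProductSpace.toDual_symm_apply
    rw [h2, h1.fderiv]
    rfl
  have hgradP : ∀ q p w : EuclideanSpace ℝ (Fin n),
      ⟪gradP H q p, w⟫ = fderiv ℝ H (q, p) (0, w) := by
    intro q p w
    have h1 : HasFDerivAt (fun p' => H (q, p'))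
        ((fderiv ℝ H (q, p)).comp (ContinuousLinearMap.inr ℝ _ _)) p :=
      (hHdiff (q, p)).hasFDerivAt.comp p (hasFDerivAt_prodMk_right q p)
    have h2 : ⟪gradP H q p, w⟫ = fderiv ℝ (fun p' => H (q, p')) p w :=
      InnerProductSpace.toDual_symm_apply
    rw [h2, h1.fderiv]
    rfl
  -- the key formula for the derivative of q ↦ H (q, ∇S q)
  have key : ∀ q v : EuclideanSpace ℝ (Fin n),
      fderiv ℝ (fun q' => H (q', ∇ S q')) q v =
      ⟪gradQ H q (∇ S q) + fderiv ℝ (fun q' => ∇ S q') q (gradP H q (∇ S q)), v⟫ := by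
    intro q v
    set A := fderiv ℝ (fun q' => ∇ S q') q with hA
    have hg : HasFDerivAt (fun q' => (q', ∇ S q'))
        ((ContinuousLinearMap.id ℝ _).prod A) q :=
      HasFDerivAt.prodMk (hasFDerivAt_id q) (hgraddiff q).hasFDerivAt
    have hcomp : HasFDerivAt (fun q' => H (q', ∇ S q'))
        ((fderiv ℝ H (q, ∇ S q)).comp ((ContinuousLinearMap.id ℝ _).prod A)) q :=
      (hHdiff (q, ∇ S q)).hasFDerivAt.comp q hg
    rw [hcomp.fderiv]
    have hsplit : fderiv ℝ H (q, ∇ S q) (v, A v) =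
        fderiv ℝ H (q, ∇ S q) (v, 0) + fderiv ℝ H (q, ∇ S q) (0, A v) := by
      rw [← ContinuousLinearMap.map_add]
      norm_num
    have hthis : ((fderiv ℝ H (q, ∇ S q)).comp ((ContinuousLinearMap.id ℝ _).prod A)) v =
        fderiv ℝ H (q, ∇ S q) (v, A v) := rfl
    rw [hthis, hsplit, ← hgradQ q (∇ S q) v, ← hgradP q (∇ S q) (A v)]
    have h4 : ⟪gradP H q (∇ S q), A v⟫ = ⟪A (gradP H q (∇ S q)), v⟫ := by
      rw [real_inner_comm, hA, hinnerA q v (gradP H q (∇ S q)),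
        hsymm q v (gradP H q (∇ S q)), ← hinnerA q (gradP H q (∇ S q)) v]
    rw [h4, ← inner_add_left]
  constructor
  · intro h q
    have h0 : ∀ v : EuclideanSpace ℝ (Fin n),
        ⟪gradQ H q (∇ S q) + fderiv ℝ (fun q' => ∇ S q') q (gradP H q (∇ S q)), v⟫ = 0 := by
      intro v
      rw [← key q v, h q]
      rfl
    have hzero : gradQ H q (∇ S q) +
        fderiv ℝ (fun q' => ∇ S q') q (gradP H q (∇ S q)) = 0 :=
      inner_self_eq_zero.mp (h0 _)
    exact eq_neg_of_add_eq_zero_right hzero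
  · intro h q
    ext v
    rw [ContinuousLinearMap.zero_apply, key q v, h q]
    simp
end

section
/- Let H : E × E → ℝ be of class C¹ and S : E → ℝ of class C², and suppose the function q ↦ H(q, ∇S q) is constant on E (the Hamilton–Jacobi equation). Then for every curve γ : ℝ → E satisfying γ'(t) = ∇_pH(γ t, ∇S (γ t)) for all t (i.e. γ is an integral curve of the vector field associated with dS), the lifted curve ζ(t) := (γ t, ∇S (γ t)) solves Hamilton's equations: at every t, ζ has derivative (∇_pH(ζ t), −∇_qH(ζ t)). -/
open scoped Gradient
open scoped RealInnerProductSpace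

/-- If `S` solves the Hamilton–Jacobi equation `H (q, ∇S q) = const`, then any integral
curve `γ` of the vector field `q ↦ ∇ₚH (q, ∇S q)` lifts to a curve
`ζ t = (γ t, ∇S (γ t))` solving Hamilton's equations. -/
theorem lifted_curve_solves_hamilton_of_HJ {n : ℕ}
    (H : EuclideanSpace ℝ (Fin n) × EuclideanSpace ℝ (Fin n) → ℝ)
    (hH : ContDiff ℝ 1 H)
    (S : EuclideanSpace ℝ (Fin n) → ℝ) (hS : ContDiff ℝ 2 S)
    (hHJ : ∀ q q', H (q, ∇ S q) = H (q', ∇ S q'))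
    (γ : ℝ → EuclideanSpace ℝ (Fin n))
    (hγ : ∀ t, HasDerivAt γ (gradP H (γ t) (∇ S (γ t))) t) :
    ∀ t, HasDerivAt (fun s => ((γ s, ∇ S (γ s)) : EuclideanSpace ℝ (Fin n) × EuclideanSpace ℝ (Fin n)))
      (gradP H (γ t) (∇ S (γ t)), -gradQ H (γ t) (∇ S (γ t))) t := by
  intro t
  let E := EuclideanSpace ℝ (Fin n)
  set q₀ := γ t with hq₀
  set p₀ := ∇ S q₀ with hp₀
  set v₀ := gradP H q₀ p₀ with hv₀
  -- the dual equivalence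
  set ι := InnerProductSpace.toDual ℝ E with hι
  -- second derivative of S at q₀
  set f'' := fderiv ℝ (fderiv ℝ S) q₀ with hf''
  have hS1 : Differentiable ℝ S := hS.differentiable two_ne_zero
  have hfd : ContDiff ℝ 1 (fderiv ℝ S) := hS.fderiv_right le_rfl
  have hf''at : HasFDerivAt (fderiv ℝ S) f'' q₀ :=
    ((hfd.differentiable one_ne_zero) q₀).hasFDerivAt
  -- ∇ S = ι.symm ∘ fderiv S, so it has derivative A := ι.symm ∘L f'' at q₀
  set A : E →L[ℝ] E := (ι.symm.toContinuousLinearEquiv :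
      (E →L[ℝ] ℝ) ≃L[ℝ] E).toContinuousLinearMap.comp f'' with hA
  have hgrad_eq : (fun q => ∇ S q) = fun q => ι.symm (fderiv ℝ S q) := rfl
  have hAat : HasFDerivAt (fun q => ∇ S q) A q₀ := by
    rw [hgrad_eq]
    exact ((ι.symm.toContinuousLinearEquiv :
      (E →L[ℝ] ℝ) ≃L[ℝ] E).toContinuousLinearMap.hasFDerivAt).comp q₀ hf''at
  have hAinner : ∀ v w : E, (inner ℝ (A v) (w) : ℝ) = f'' v w := by
    intro v w
    exact InnerProductSpace.toDual_symm_apply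
  -- symmetry of the second derivative
  have hsymm : ∀ v w : E, f'' v w = f'' w v :=
    second_derivative_symmetric (fun y => (hS1 y).hasFDerivAt) hf''at
  -- the full derivative of H at (q₀, p₀)
  set DH := fderiv ℝ H (q₀, p₀) with hDH
  have hHd : HasFDerivAt H DH (q₀, p₀) :=
    (hH.differentiable one_ne_zero _).hasFDerivAt
  -- gradQ and gradP as inner products against partial derivatives of H
  have hQ : ∀ v : E, (inner ℝ (gradQ H q₀ p₀) (v) : ℝ) = DH (v, 0) := by
    intro v
    have h1 : HasFDerivAt (fun q' : E => (q', p₀)) (ContinuousLinearMap.inl ℝ E E) q₀ :=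
      hasFDerivAt_prodMk_left q₀ p₀
    have h2 : HasFDerivAt (fun q' => H (q', p₀)) (DH.comp (ContinuousLinearMap.inl ℝ E E)) q₀ :=
      hHd.comp q₀ h1
    have h3 : gradQ H q₀ p₀ = ι.symm (DH.comp (ContinuousLinearMap.inl ℝ E E)) := by
      rw [gradQ, gradient, h2.fderiv]
    rw [h3]
    exact InnerProductSpace.toDual_symm_apply
  have hP : ∀ w : E, (inner ℝ (gradP H q₀ p₀) (w) : ℝ) = DH (0, w) := by
    intro w
    have h1 : HasFDerivAt (fun p' : E => ((q₀ : E), p')) (ContinuousLinearMap.inr ℝ E E) p₀ :=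
      hasFDerivAt_prodMk_right q₀ p₀
    have h2 : HasFDerivAt (fun p' => H (q₀, p')) (DH.comp (ContinuousLinearMap.inr ℝ E E)) p₀ :=
      hHd.comp p₀ h1
    have h3 : gradP H q₀ p₀ = ι.symm (DH.comp (ContinuousLinearMap.inr ℝ E E)) := by
      rw [gradP, gradient, h2.fderiv]
    rw [h3]
    exact InnerProductSpace.toDual_symm_apply
  -- derivative of the constant function q ↦ H (q, ∇ S q) vanishes
  have hconst : ∀ v : E, DH (v, A v) = 0 := by
    intro v
    have hφ : HasFDerivAt (fun q : E => ((q, ∇ S q) : E × E))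
        ((ContinuousLinearMap.id ℝ E).prod A) q₀ :=
      (hasFDerivAt_id q₀).prodMk hAat
    have hg : HasFDerivAt (fun q : E => H (q, ∇ S q))
        (DH.comp ((ContinuousLinearMap.id ℝ E).prod A)) q₀ := hHd.comp q₀ hφ
    have hg0 : HasFDerivAt (fun q : E => H (q, ∇ S q)) (0 : E →L[ℝ] ℝ) q₀ := by
      have : (fun q : E => H (q, ∇ S q)) = fun _ => H (q₀, ∇ S q₀) := by
        funext q; exact hHJ q q₀
      rw [this]; exact hasFDerivAt_const _ _
    have := hg.unique hg0
    calc DH (v, A v) = (DH.comp ((ContinuousLinearMap.id ℝ E).prod A)) v := rfl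
      _ = (0 : E →L[ℝ] ℝ) v := by rw [this]
      _ = 0 := rfl
  -- conclude A v₀ = - gradQ
  have hkey : A v₀ = -gradQ H q₀ p₀ := by
    apply ext_inner_right ℝ
    intro v
    have h1 : (inner ℝ (A v₀) (v) : ℝ) = (inner ℝ (A v) (v₀) : ℝ) := by
      rw [hAinner, hAinner, hsymm]
    have h2 : (inner ℝ (A v) (v₀) : ℝ) = DH (0, A v) := by
      rw [real_inner_comm]; exact hP (A v)
    have h3 : DH (v, A v) = DH (v, 0) + DH (0, A v) := by
      rw [← map_add]; norm_num
    have h4 : DH (0, A v) = -DH (v, 0) := by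
      have := hconst v; rw [h3] at this; linarith
    rw [h1, h2, h4, ← hQ v, inner_neg_left]
  -- assemble the product derivative
  have hsecond : HasDerivAt (fun s => ∇ S (γ s)) (A v₀) t :=
    hAat.comp_hasDerivAt t (hγ t)
  rw [hkey] at hsecond
  exact (hγ t).prodMk hsecond
end

section
/- Let H : E × E → ℝ be differentiable and α : E → E differentiable at every point, and set X_α(q) := ∇_pH(q, α q). Then the following are equivalent: (i) for all q, fderiv α q (X_α q) = −∇_qH(q, α q) (α is a solution of the generalized Hamiltonian Hamilton–Jacobi problem); (ii) for all q ∈ E and all v ∈ E, ⟪fderiv α q (X_α q), v⟫ − ⟪fderiv α q v, X_α q⟫ = −(⟪∇_qH(q, α q), v⟫ + ⟪∇_pH(q, α q), fderiv α q v⟫), i.e. the equation i_{X_α} dα = −d(α*H) holds. -/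
open scoped Gradient RealInnerProductSpace

/-- A 1-form `α` is a solution of the generalized Hamiltonian Hamilton–Jacobi problem iff
the equation `i_{X_α} dα = -d(α*H)` holds, where `X_α q = ∇ₚH (q, α q)` is the vector field
associated with `α`. -/
theorem genHJ_iff_contraction_equation {n : ℕ}
    (H : EuclideanSpace ℝ (Fin n) × EuclideanSpace ℝ (Fin n) → ℝ)
    (hH : Differentiable ℝ H)
    (α : EuclideanSpace ℝ (Fin n) → EuclideanSpace ℝ (Fin n))
    (hα : ∀ q, DifferentiableAt ℝ α q) :
    (∀ q, fderiv ℝ α q (gradP H q (α q)) = - gradQ H q (α q)) ↔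
    (∀ q v, ⟪fderiv ℝ α q (gradP H q (α q)), v⟫ - ⟪fderiv ℝ α q v, gradP H q (α q)⟫ =
      -(⟪gradQ H q (α q), v⟫ + ⟪gradP H q (α q), fderiv ℝ α q v⟫)) := by
  constructor
  · intro h q v
    rw [h q, inner_neg_left, real_inner_comm (fderiv ℝ α q v)]
    ring
  · intro h q
    apply ext_inner_right ℝ
    intro v
    have := h q v
    rw [real_inner_comm (gradP H q (α q)) (fderiv ℝ α q v)] at this
    rw [inner_neg_left]
    linarith
end

section
/- Let H : E × E → ℝ be differentiable and α : E → E differentiable at every point, with X_α(q) := ∇_pH(q, α q). Assume α is a solution of the generalized Hamiltonian Hamilton–Jacobi problem: fderiv α q (X_α q) = −∇_qH(q, α q) for all q. Then for every curve γ : ℝ → E with γ'(t) = X_α(γ t) for all t, the curve ζ(t) := (γ t, α (γ t)) solves Hamilton's equations: at every t, ζ has derivative (∇_pH(ζ t), −∇_qH(ζ t)). -/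
open scoped Gradient

/-- If `α` is a solution of the generalized Hamiltonian Hamilton–Jacobi problem, then any
integral curve `γ` of the associated vector field `X_α q = ∇ₚH (q, α q)` lifts to a curve
`ζ t = (γ t, α (γ t))` solving Hamilton's equations. -/
theorem lifted_curve_solves_hamilton_of_genHJ {n : ℕ}
    (H : EuclideanSpace ℝ (Fin n) × EuclideanSpace ℝ (Fin n) → ℝ)
    (hH : Differentiable ℝ H)
    (α : EuclideanSpace ℝ (Fin n) → EuclideanSpace ℝ (Fin n))
    (hα : ∀ q, DifferentiableAt ℝ α q)
    (hHJ : ∀ q, fderiv ℝ α q (gradP H q (α q)) = - gradQ H q (α q))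
    (γ : ℝ → EuclideanSpace ℝ (Fin n))
    (hγ : ∀ t, HasDerivAt γ (gradP H (γ t) (α (γ t))) t) :
    ∀ t, HasDerivAt
      (fun s => ((γ s, α (γ s)) : EuclideanSpace ℝ (Fin n) × EuclideanSpace ℝ (Fin n)))
      (gradP H (γ t) (α (γ t)), -gradQ H (γ t) (α (γ t))) t := by
  intro t
  have h2 : HasDerivAt (fun s => α (γ s)) (-gradQ H (γ t) (α (γ t))) t := by
    have := ((hα (γ t)).hasFDerivAt).comp_hasDerivAt t (hγ t)
    rwa [hHJ (γ t)] at this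
  exact HasDerivAt.prodMk (hγ t) h2
end

section
/- Let H : E × E → ℝ be differentiable with Lipschitz Hamiltonian vector field Z_H(q,p) := (∇_pH(q,p), −∇_qH(q,p)), and let α : E → E be differentiable at every point and a solution of the generalized Hamiltonian Hamilton–Jacobi problem: fderiv α q (X_α q) = −∇_qH(q, α q) for all q, where X_α(q) := ∇_pH(q, α q). Let γ : ℝ → E satisfy γ'(t) = X_α(γ t) for all t with γ 0 = q₀, and let ζ : ℝ → E × E solve Hamilton's equations with ζ 0 = (q₀, α q₀). Then ζ t = (γ t, α (γ t)) for all t ∈ ℝ; in particular, the integral curve ζ of Z_H starting on the graph of α stays in the graph of α and its first component projects onto the integral curve γ of X_α. -/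
open scoped Gradient

/-- The Hamiltonian vector field `Z_H (q, p) = (∇ₚH (q, p), -∇_qH (q, p))`. -/
noncomputable def hamVF {n : ℕ}
    (H : EuclideanSpace ℝ (Fin n) × EuclideanSpace ℝ (Fin n) → ℝ)
    (qp : EuclideanSpace ℝ (Fin n) × EuclideanSpace ℝ (Fin n)) :
    EuclideanSpace ℝ (Fin n) × EuclideanSpace ℝ (Fin n) :=
  (gradP H qp.1 qp.2, -gradQ H qp.1 qp.2)

/-- If `α` solves the generalized Hamiltonian Hamilton–Jacobi problem and the Hamiltonian
vector field is Lipschitz, then the integral curve of `Z_H` starting on the graph of `α`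
stays in the graph of `α` and projects onto the corresponding integral curve of `X_α`. -/
theorem integral_curve_stays_in_graph {n : ℕ}
    (H : EuclideanSpace ℝ (Fin n) × EuclideanSpace ℝ (Fin n) → ℝ)
    (hH : Differentiable ℝ H)
    (K : NNReal) (hLip : LipschitzWith K (hamVF H))
    (α : EuclideanSpace ℝ (Fin n) → EuclideanSpace ℝ (Fin n))
    (hα : ∀ q, DifferentiableAt ℝ α q)
    (hHJ : ∀ q, fderiv ℝ α q (gradP H q (α q)) = - gradQ H q (α q))
    (q₀ : EuclideanSpace ℝ (Fin n))
    (γ : ℝ → EuclideanSpace ℝ (Fin n))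
    (hγ : ∀ t, HasDerivAt γ (gradP H (γ t) (α (γ t))) t) (hγ0 : γ 0 = q₀)
    (ζ : ℝ → EuclideanSpace ℝ (Fin n) × EuclideanSpace ℝ (Fin n))
    (hζ : ∀ t, HasDerivAt ζ (hamVF H (ζ t)) t) (hζ0 : ζ 0 = (q₀, α q₀)) :
    ∀ t, ζ t = (γ t, α (γ t)) := by
  set η : ℝ → EuclideanSpace ℝ (Fin n) × EuclideanSpace ℝ (Fin n) :=
    fun t => (γ t, α (γ t)) with hη
  have hη' : ∀ t, HasDerivAt η (hamVF H (η t)) t := by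
    intro t
    have h1 : HasDerivAt (fun t => α (γ t))
        (fderiv ℝ α (γ t) (gradP H (γ t) (α (γ t)))) t :=
      (hα (γ t)).hasFDerivAt.comp_hasDerivAt t (hγ t)
    rw [hHJ (γ t)] at h1
    exact (hγ t).prodMk h1
  intro t
  by_cases ht : t = 0
  · subst ht; rw [hζ0, hγ0]
  · have key : Set.EqOn ζ η (Set.Ioo (-(|t| + 1)) (|t| + 1)) := by
      apply ODE_solution_unique_of_mem_Ioo
        (v := fun _ x => hamVF H x) (s := fun _ => Set.univ) (t₀ := 0)
        (fun _ _ => hLip.lipschitzOnWith)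
      · constructor <;> [linarith [abs_nonneg t]; linarith [abs_nonneg t]]
      · exact fun s _ => ⟨hζ s, trivial⟩
      · exact fun s _ => ⟨hη' s, trivial⟩
      · simp only [hζ0, hη, hγ0]
    exact key ⟨by linarith [neg_abs_le t], by linarith [le_abs_self t]⟩
end

section
/- Let H : E × E → ℝ be differentiable with Lipschitz Hamiltonian vector field Z_H, and let ᾱ : E × E → E be a family of 1-forms, λ ↦ ᾱ(·,λ), each differentiable in q and each a solution of the generalized Hamiltonian Hamilton–Jacobi problem: fderiv (fun q => ᾱ(q,λ)) q (∇_pH(q, ᾱ(q,λ))) = −∇_qH(q, ᾱ(q,λ)) for all q, λ. Define Φ : E × E → E × E by Φ(q,λ) := (q, ᾱ(q,λ)) and assume Φ is injective. Let ζ : ℝ → E × E solve Hamilton's equations with ζ 0 = Φ(q₀, λ₀), and let γ : ℝ → E satisfy γ'(t) = ∇_pH(γ t, ᾱ(γ t, λ₀)) for all t with γ 0 = q₀. Then for every t ∈ ℝ and every (q,λ) with Φ(q,λ) = ζ t, one has λ = λ₀; that is, the parameter map of the complete solution is a constant of motion of Z_H. -/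
open scoped Gradient

/-- For a complete solution `ᾱ` of the generalized Hamiltonian Hamilton–Jacobi problem,
with `Φ (q, λ) = (q, ᾱ (q, λ))` injective, the parameter map is a constant of motion of the
Hamiltonian vector field: along any integral curve of `Z_H` starting at `Φ (q₀, λ₀)`, the
parameter stays equal to `λ₀`. -/
theorem complete_solution_parameters_are_constants_of_motion {n : ℕ}
    (H : EuclideanSpace ℝ (Fin n) × EuclideanSpace ℝ (Fin n) → ℝ)
    (hH : Differentiable ℝ H)
    (K : NNReal) (hLip : LipschitzWith K (hamVF H))
    (ᾱ : EuclideanSpace ℝ (Fin n) × EuclideanSpace ℝ (Fin n) → EuclideanSpace ℝ (Fin n))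
    (hdiff : ∀ lam q, DifferentiableAt ℝ (fun q' => ᾱ (q', lam)) q)
    (hHJ : ∀ lam q, fderiv ℝ (fun q' => ᾱ (q', lam)) q (gradP H q (ᾱ (q, lam))) =
      - gradQ H q (ᾱ (q, lam)))
    (hΦinj : Function.Injective
      (fun qlam : EuclideanSpace ℝ (Fin n) × EuclideanSpace ℝ (Fin n) =>
        ((qlam.1, ᾱ qlam) : EuclideanSpace ℝ (Fin n) × EuclideanSpace ℝ (Fin n))))
    (q₀ lam₀ : EuclideanSpace ℝ (Fin n))
    (ζ : ℝ → EuclideanSpace ℝ (Fin n) × EuclideanSpace ℝ (Fin n))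
    (hζ : ∀ t, HasDerivAt ζ (hamVF H (ζ t)) t) (hζ0 : ζ 0 = (q₀, ᾱ (q₀, lam₀)))
    (γ : ℝ → EuclideanSpace ℝ (Fin n))
    (hγ : ∀ t, HasDerivAt γ (gradP H (γ t) (ᾱ (γ t, lam₀))) t) (hγ0 : γ 0 = q₀) :
    ∀ (t : ℝ) (q lam : EuclideanSpace ℝ (Fin n)),
      ((q, ᾱ (q, lam)) : EuclideanSpace ℝ (Fin n) × EuclideanSpace ℝ (Fin n)) = ζ t →
      lam = lam₀ := by
  -- The curve η t := (γ t, ᾱ (γ t, lam₀)) is also a solution of Hamilton's equations.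
  set η : ℝ → EuclideanSpace ℝ (Fin n) × EuclideanSpace ℝ (Fin n) :=
    fun t => (γ t, ᾱ (γ t, lam₀)) with hη
  have hηderiv : ∀ t, HasDerivAt η (hamVF H (η t)) t := by
    intro t
    have h2 : HasDerivAt (fun s => ᾱ (γ s, lam₀))
        ((fderiv ℝ (fun q' => ᾱ (q', lam₀)) (γ t)) (gradP H (γ t) (ᾱ (γ t, lam₀)))) t :=
      (hdiff lam₀ (γ t)).hasFDerivAt.comp_hasDerivAt t (hγ t)
    rw [hHJ lam₀ (γ t)] at h2
    exact (hγ t).prodMk h2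
  have hζη : ∀ t, ζ t = η t := by
    intro t
    have hmem : t ∈ Set.Icc (-(|t| + 1)) (|t| + 1) := by
      constructor <;> [nlinarith [abs_nonneg t, neg_abs_le t]; nlinarith [le_abs_self t]]
    have h0 : (0 : ℝ) ∈ Set.Ioo (-(|t| + 1)) (|t| + 1) := by
      constructor <;> nlinarith [abs_nonneg t]
    refine ODE_solution_unique_of_mem_Icc (v := fun _ => hamVF H)
      (s := fun _ => Set.univ) (fun _ _ => hLip.lipschitzOnWith) h0
      ?_ (fun s _ => hζ s) (fun _ _ => trivial)
      ?_ (fun s _ => hηderiv s) (fun _ _ => trivial) ?_ hmem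
    · exact fun s _ => (hζ s).continuousAt.continuousWithinAt
    · exact fun s _ => (hηderiv s).continuousAt.continuousWithinAt
    · rw [hζ0, hη]; simp [hγ0]
  intro t q lam h
  have := hΦinj (a₁ := (q, lam)) (a₂ := (γ t, lam₀)) (h.trans (hζη t))
  exact congrArg Prod.snd this
end

section
/- Let H : E × E → ℝ be differentiable, let F := EuclideanSpace ℝ (Fin m), let α : F → E × E be a map with differentiable components a := Prod.fst ∘ α and b := Prod.snd ∘ α, and let X : F → F be a vector field. Assume (α, X) solves the slicing equation Tα ∘ X = Z_H ∘ α, i.e. for all x ∈ F: fderiv a x (X x) = ∇_pH(α x) and fderiv b x (X x) = −∇_qH(α x). Then for all x ∈ F and v ∈ F, ⟪fderiv a x (X x), fderiv b x v⟫ − ⟪fderiv a x v, fderiv b x (X x)⟫ = fderiv (H ∘ α) x v; that is, i_X (α*ω) = d(α*H). -/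
open scoped Gradient RealInnerProductSpace

lemma inner_gradient_eq {n : ℕ} (f : EuclideanSpace ℝ (Fin n) → ℝ)
    (y u : EuclideanSpace ℝ (Fin n)) : ⟪∇ f y, u⟫ = fderiv ℝ f y u :=
  InnerProductSpace.toDual_symm_apply

/-- If `(α, X)` solves the slicing equation `Tα ∘ X = Z_H ∘ α`, then the contraction of the
pullback `α*ω` of the canonical symplectic form with `X` equals the differential of the
pullback `α*H = H ∘ α`: `i_X (α*ω) = d(α*H)`. -/
theorem slicing_implies_contraction_equation {n m : ℕ}
    (H : EuclideanSpace ℝ (Fin n) × EuclideanSpace ℝ (Fin n) → ℝ)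
    (hH : Differentiable ℝ H)
    (α : EuclideanSpace ℝ (Fin m) → EuclideanSpace ℝ (Fin n) × EuclideanSpace ℝ (Fin n))
    (ha : Differentiable ℝ (fun x => (α x).1)) (hb : Differentiable ℝ (fun x => (α x).2))
    (X : EuclideanSpace ℝ (Fin m) → EuclideanSpace ℝ (Fin m))
    (hslice : ∀ x, fderiv ℝ (fun x' => (α x').1) x (X x) = gradP H (α x).1 (α x).2 ∧
      fderiv ℝ (fun x' => (α x').2) x (X x) = - gradQ H (α x).1 (α x).2) :
    ∀ x v, ⟪fderiv ℝ (fun x' => (α x').1) x (X x), fderiv ℝ (fun x' => (α x').2) x v⟫ -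
        ⟪fderiv ℝ (fun x' => (α x').1) x v, fderiv ℝ (fun x' => (α x').2) x (X x)⟫ =
      fderiv ℝ (H ∘ α) x v := by
  intro x v
  obtain ⟨h1, h2⟩ := hslice x
  set q := (α x).1 with hq
  set p := (α x).2 with hp
  -- partial derivatives of H
  have hQ : ∀ u, fderiv ℝ (fun q' => H (q', p)) q u = fderiv ℝ H (q, p) (u, 0) := by
    intro u
    have : HasFDerivAt (fun q' => H (q', p))
        ((fderiv ℝ H (q, p)).comp (ContinuousLinearMap.inl ℝ _ _)) q :=
      ((hH (q, p)).hasFDerivAt).comp q (hasFDerivAt_prodMk_left q p)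
    rw [this.fderiv]; rfl
  have hP : ∀ w, fderiv ℝ (fun p' => H (q, p')) p w = fderiv ℝ H (q, p) (0, w) := by
    intro w
    have : HasFDerivAt (fun p' => H (q, p'))
        ((fderiv ℝ H (q, p)).comp (ContinuousLinearMap.inr ℝ _ _)) p :=
      ((hH (q, p)).hasFDerivAt).comp p (hasFDerivAt_prodMk_right q p)
    rw [this.fderiv]; rfl
  -- chain rule
  have hαd : HasFDerivAt α
      ((fderiv ℝ (fun x' => (α x').1) x).prod (fderiv ℝ (fun x' => (α x').2) x)) x := by
    have := ((ha x).hasFDerivAt).prodMk ((hb x).hasFDerivAt)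
    simpa using this
  have hcomp : fderiv ℝ (H ∘ α) x v =
      fderiv ℝ H (q, p) (fderiv ℝ (fun x' => (α x').1) x v,
        fderiv ℝ (fun x' => (α x').2) x v) := by
    have := ((hH (α x)).hasFDerivAt).comp x hαd
    rw [this.fderiv]
    rfl
  have hsplit : fderiv ℝ H (q, p) (fderiv ℝ (fun x' => (α x').1) x v,
        fderiv ℝ (fun x' => (α x').2) x v) =
      ⟪gradQ H q p, fderiv ℝ (fun x' => (α x').1) x v⟫ +
      ⟪gradP H q p, fderiv ℝ (fun x' => (α x').2) x v⟫ := by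
    rw [gradQ, gradP, inner_gradient_eq, inner_gradient_eq, hQ, hP, ← map_add]
    congr 1
    simp [Prod.mk_add_mk]
  rw [hcomp, hsplit, h1, h2]
  rw [inner_neg_right, sub_neg_eq_add,
    real_inner_comm ((fderiv ℝ (fun x' => (α x').1) x) v), add_comm]
end

section
/- Let H : E × E → ℝ be differentiable, F := EuclideanSpace ℝ (Fin m), α : F → E × E with differentiable components a := Prod.fst ∘ α and b := Prod.snd ∘ α, and X : F → F. Assume (α, X) solves the slicing equation: for all x, fderiv a x (X x) = ∇_pH(α x) and fderiv b x (X x) = −∇_qH(α x); and assume α is isotropic (α*ω = 0): ⟪fderiv a x u, fderiv b x v⟫ = ⟪fderiv a x v, fderiv b x u⟫ for all x, u, v. Then d(α*H) = 0, i.e. the function H ∘ α : F → ℝ has zero Fréchet derivative at every point of F. -/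
open scoped Gradient RealInnerProductSpace

lemma grad_inner {n : ℕ} (f : EuclideanSpace ℝ (Fin n) → ℝ) (x u : EuclideanSpace ℝ (Fin n)) :
    ⟪∇ f x, u⟫ = fderiv ℝ f x u := by
  rw [gradient, InnerProductSpace.toDual_symm_apply]

/-- If `(α, X)` solves the slicing equation for the Hamiltonian vector field of `H` and `α`
is isotropic (`α*ω = 0`), then `d(α*H) = 0`: the pullback `H ∘ α` has zero Fréchet
derivative at every point. -/
theorem slicing_isotropic_implies_pullback_locally_constant {n m : ℕ}
    (H : EuclideanSpace ℝ (Fin n) × EuclideanSpace ℝ (Fin n) → ℝ)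
    (hH : Differentiable ℝ H)
    (α : EuclideanSpace ℝ (Fin m) → EuclideanSpace ℝ (Fin n) × EuclideanSpace ℝ (Fin n))
    (ha : Differentiable ℝ (fun x => (α x).1)) (hb : Differentiable ℝ (fun x => (α x).2))
    (X : EuclideanSpace ℝ (Fin m) → EuclideanSpace ℝ (Fin m))
    (hslice : ∀ x, fderiv ℝ (fun x' => (α x').1) x (X x) = gradP H (α x).1 (α x).2 ∧
      fderiv ℝ (fun x' => (α x').2) x (X x) = - gradQ H (α x).1 (α x).2)
    (hiso : ∀ x u v, ⟪fderiv ℝ (fun x' => (α x').1) x u, fderiv ℝ (fun x' => (α x').2) x v⟫ =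
      ⟪fderiv ℝ (fun x' => (α x').1) x v, fderiv ℝ (fun x' => (α x').2) x u⟫) :
    ∀ x, fderiv ℝ (H ∘ α) x = 0 := by
  intro x
  have hα : DifferentiableAt ℝ α x := by
    have := ((ha.differentiableAt (x := x)).prodMk (hb.differentiableAt (x := x)))
    simpa using this
  set q := (α x).1
  set p := (α x).2
  -- derivative of the partial maps
  have hq : HasFDerivAt (fun q' => H (q', p))
      ((fderiv ℝ H (α x)).comp (ContinuousLinearMap.inl ℝ _ _)) q :=
    (hH (α x)).hasFDerivAt.comp q (hasFDerivAt_prodMk_left q p)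
  have hp : HasFDerivAt (fun p' => H (q, p'))
      ((fderiv ℝ H (α x)).comp (ContinuousLinearMap.inr ℝ _ _)) p :=
    (hH (α x)).hasFDerivAt.comp p (hasFDerivAt_prodMk_right q p)
  have hgq : ∀ u, ⟪gradQ H q p, u⟫ = fderiv ℝ H (α x) (u, 0) := by
    intro u
    rw [gradQ, grad_inner, hq.fderiv]
    rfl
  have hgp : ∀ v, ⟪gradP H q p, v⟫ = fderiv ℝ H (α x) (0, v) := by
    intro v
    rw [gradP, grad_inner, hp.fderiv]
    rfl
  ext u
  have hcomp : fderiv ℝ (H ∘ α) x = (fderiv ℝ H (α x)).comp (fderiv ℝ α x) :=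
    fderiv_comp x (hH (α x)) hα
  have hprod : fderiv ℝ α x = (fderiv ℝ (fun x' => (α x').1) x).prod
      (fderiv ℝ (fun x' => (α x').2) x) := (ha.differentiableAt (x := x)).fderiv_prodMk (hb.differentiableAt (x := x))
  have hval : (fderiv ℝ α x) u = (fderiv ℝ (fun x' => (α x').1) x u,
      fderiv ℝ (fun x' => (α x').2) x u) := by rw [hprod]; rfl
  have key : fderiv ℝ (H ∘ α) x u
      = ⟪gradQ H q p, fderiv ℝ (fun x' => (α x').1) x u⟫
      + ⟪gradP H q p, fderiv ℝ (fun x' => (α x').2) x u⟫ := by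
    rw [hcomp]
    simp only [ContinuousLinearMap.comp_apply, hval]
    have split : ((fderiv ℝ (fun x' => (α x').1) x u : EuclideanSpace ℝ (Fin n)),
        (fderiv ℝ (fun x' => (α x').2) x u : EuclideanSpace ℝ (Fin n)))
        = (fderiv ℝ (fun x' => (α x').1) x u, 0) + (0, fderiv ℝ (fun x' => (α x').2) x u) := by
      simp [Prod.ext_iff]
    rw [split, map_add, ← hgq, ← hgp]
  rw [key]
  have h1 := (hslice x).1
  have h2 := (hslice x).2
  have hGQ : gradQ H q p = - fderiv ℝ (fun x' => (α x').2) x (X x) := by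
    rw [h2]; simp; rfl
  have hGP : gradP H q p = fderiv ℝ (fun x' => (α x').1) x (X x) := h1.symm
  rw [hGQ, hGP, inner_neg_left]
  have hsym := hiso x (X x) u
  rw [ContinuousLinearMap.zero_apply, hsym,
    real_inner_comm (fderiv ℝ (fun x' => (α x').2) x (X x))
      (fderiv ℝ (fun x' => (α x').1) x u),
    real_inner_comm (fderiv ℝ (fun x' => (α x').1) x u)
      (fderiv ℝ (fun x' => (α x').2) x (X x))]
  ring
end
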